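/- Let p ∈ [1,∞) and let f : ℝ² → ℂ be a finite ℂ-linear combination of the functions U_{m,n} with m,n ∈ ℤ, 3 ∣ m+n (respectively, of the functions V_{m,n} with m,n ∈ ℤ, 3 ∣ m+n, m ≠ 2n, n ≠ 2m). Then ∫_𝒫 |f(x)|^p dx = 18 ∫_𝒯 |f(x)|^p dx, where 𝒫 := {a·(1,0) + b·(1/2,√3/2) : 0 < a < 3, 0 < b < 3} is the Pinsky parallelogram and 𝒯 := {(x,y) ∈ ℝ² : 0 < x < 1, 0 < y < √3·x, y < √3·(1−x)} is the open equilateral triangle. -/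

import Mathlib

open MeasureTheory Real

noncomputable section

/-- The open equilateral triangle. -/
def Tri : Set (ℝ × ℝ) :=
  {p | 0 < p.1 ∧ p.1 < 1 ∧ 0 < p.2 ∧ p.2 < Real.sqrt 3 * p.1 ∧ p.2 < Real.sqrt 3 * (1 - p.1)}

/-- The Pinsky parallelogram `𝒫 = {a·(1,0) + b·(1/2,√3/2) : 0 < a,b < 3}`. -/
def Pins : Set (ℝ × ℝ) :=
  {x | ∃ a b : ℝ, 0 < a ∧ a < 3 ∧ 0 < b ∧ b < 3 ∧
    x = (a + b * (1 / 2), b * (Real.sqrt 3 / 2))}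

/-- The frequency vector `k_{m,n}`. -/
def kvec (m n : ℤ) : ℝ × ℝ :=
  (2 * Real.pi / 3 * m, 2 * Real.pi / 3 * ((2 * (n : ℝ) - m) / Real.sqrt 3))

/-- The exponential `e_{m,n}(x) = exp(i k_{m,n} · x)`. -/
def efun (m n : ℤ) (x : ℝ × ℝ) : ℂ :=
  Complex.exp (Complex.I * ((((kvec m n).1 * x.1 + (kvec m n).2 * x.2 : ℝ)) : ℂ))

/-- The Neumann trigonometric eigenfunction `U_{m,n}`. -/
def Ufun (m n : ℤ) (x : ℝ × ℝ) : ℂ :=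
  efun m n x + efun m (m - n) x + efun (-n) (m - n) x + efun (-n) (-m) x
    + efun (n - m) (-m) x + efun (n - m) n x

/-- The Dirichlet trigonometric eigenfunction `V_{m,n}`. -/
def Vfun (m n : ℤ) (x : ℝ × ℝ) : ℂ :=
  efun m n x - efun m (m - n) x + efun (-n) (m - n) x - efun (-n) (-m) x
    + efun (n - m) (-m) x - efun (n - m) n x

/-- The set of Neumann eigenfunctions `U_{m,n}` with `3 ∣ m+n`. -/
def NeumannFamily : Set ((ℝ × ℝ) → ℂ) :=
  {g | ∃ m n : ℤ, (3 : ℤ) ∣ m + n ∧ g = Ufun m n}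

/-- The set of Dirichlet eigenfunctions `V_{m,n}` with `3 ∣ m+n`, `m ≠ 2n`, `n ≠ 2m`. -/
def DirichletFamily : Set ((ℝ × ℝ) → ℂ) :=
  {g | ∃ m n : ℤ, (3 : ℤ) ∣ m + n ∧ m ≠ 2 * n ∧ n ≠ 2 * m ∧ g = Vfun m n}

/-! ### Auxiliary: affine maps of the plane -/

def aff (α β γ δ c₁ c₂ : ℝ) (p : ℝ × ℝ) : ℝ × ℝ :=
  (α * p.1 + β * p.2 + c₁, γ * p.1 + δ * p.2 + c₂)

def affCLM (α β γ δ : ℝ) : (ℝ × ℝ) →L[ℝ] (ℝ × ℝ) :=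
  ((α • ContinuousLinearMap.fst ℝ ℝ ℝ + β • ContinuousLinearMap.snd ℝ ℝ ℝ).prod
   (γ • ContinuousLinearMap.fst ℝ ℝ ℝ + δ • ContinuousLinearMap.snd ℝ ℝ ℝ))

lemma affCLM_apply (α β γ δ : ℝ) (p : ℝ × ℝ) :
    affCLM α β γ δ p = (α*p.1 + β*p.2, γ*p.1 + δ*p.2) := by
  simp [affCLM, smul_eq_mul]

lemma hasFDerivAt_aff (α β γ δ c₁ c₂ : ℝ) (x : ℝ × ℝ) :
    HasFDerivAt (aff α β γ δ c₁ c₂) (affCLM α β γ δ) x := by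
  have h : aff α β γ δ c₁ c₂ = fun p => affCLM α β γ δ p + (c₁, c₂) := by
    funext p
    simp [aff, affCLM_apply, Prod.ext_iff]
  rw [h]
  exact ((affCLM α β γ δ).hasFDerivAt).add_const _

lemma det_affCLM (α β γ δ : ℝ) : (affCLM α β γ δ).det = α*δ - β*γ := by
  have h : (affCLM α β γ δ).det = LinearMap.det ((affCLM α β γ δ) : (ℝ×ℝ) →ₗ[ℝ] (ℝ×ℝ)) := rfl
  rw [h, ← LinearMap.det_toMatrix (Module.Basis.finTwoProd ℝ), Matrix.det_fin_two]
  simp [LinearMap.toMatrix_apply, affCLM_apply, Module.Basis.finTwoProd]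

lemma aff_injective {α β γ δ : ℝ} (c₁ c₂ : ℝ) (h : α*δ - β*γ ≠ 0) :
    Function.Injective (aff α β γ δ c₁ c₂) := by
  rintro ⟨a,b⟩ ⟨c,d⟩ h2
  simp only [aff, Prod.mk.injEq] at h2
  obtain ⟨h3, h4⟩ := h2
  have e1 : (α*δ-β*γ) * (a - c) = 0 := by linear_combination δ*h3 - β*h4
  have e2 : (α*δ-β*γ) * (b - d) = 0 := by linear_combination α*h4 - γ*h3
  rcases mul_eq_zero.1 e1 with h1|h1
  · exact absurd h1 h
  rcases mul_eq_zero.1 e2 with h2|h2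
  · exact absurd h2 h
  have : a = c := by linarith
  have : b = d := by linarith
  simp_all

lemma setIntegral_image_aff {s : Set (ℝ×ℝ)} (hs : MeasurableSet s)
    (α β γ δ c₁ c₂ : ℝ) (h : α*δ - β*γ ≠ 0) (g : ℝ×ℝ → ℝ) :
    ∫ x in (aff α β γ δ c₁ c₂) '' s, g x
      = |α*δ-β*γ| * ∫ x in s, g (aff α β γ δ c₁ c₂ x) := by
  rw [integral_image_eq_integral_abs_det_fderiv_smul volume hs
      (fun x _ => (hasFDerivAt_aff α β γ δ c₁ c₂ x).hasFDerivWithinAt)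
      ((aff_injective c₁ c₂ h).injOn) g]
  simp only [det_affCLM, smul_eq_mul]
  exact integral_const_mul _ _

/-! ### The lattice coordinates map and the exponentials -/

def Phi : ℝ × ℝ → ℝ × ℝ := aff 1 (1/2) 0 (Real.sqrt 3 / 2) 0 0

lemma Phi_def : Phi = aff 1 (1/2) 0 (Real.sqrt 3 / 2) 0 0 := rfl

lemma efun_phi (m n : ℤ) (p : ℝ × ℝ) :
    efun m n (Phi p) =
      Complex.exp (2 * (Real.pi:ℂ) * Complex.I * ((m:ℂ) * (p.1:ℝ) + (n:ℂ) * (p.2:ℝ)) / 3) := by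
  have h3 : Real.sqrt 3 ≠ 0 := by positivity
  have hr : (kvec m n).1 * (Phi p).1 + (kvec m n).2 * (Phi p).2
      = 2 * Real.pi * ((m:ℝ) * p.1 + (n:ℝ) * p.2) / 3 := by
    simp only [kvec, Phi, aff]
    field_simp
    ring
  unfold efun
  rw [hr]
  congr 1
  push_cast
  ring

lemma exp_period (t : ℤ) (h : (3:ℤ) ∣ t) (z : ℂ) :
    Complex.exp (2 * (Real.pi:ℂ) * Complex.I * (t:ℂ) / 3 + z) = Complex.exp z := by
  obtain ⟨k, rfl⟩ := h
  rw [Complex.exp_add,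
    show (2 * (Real.pi:ℂ) * Complex.I * ((3*k : ℤ):ℂ) / 3) = (k:ℂ) * (2 * Real.pi * Complex.I)
      from by push_cast; ring,
    Complex.exp_int_mul_two_pi_mul_I, one_mul]

lemma efun_trans (m n i j : ℤ) (h : (3:ℤ) ∣ m * i + n * j) (p : ℝ × ℝ) :
    efun m n (Phi (aff 1 0 0 1 (i:ℝ) (j:ℝ) p)) = efun m n (Phi p) := by
  rw [efun_phi, efun_phi]
  rw [show (2 * (Real.pi:ℂ) * Complex.I *
        ((m:ℂ) * ((aff 1 0 0 1 (i:ℝ) (j:ℝ) p).1 : ℝ) + (n:ℂ) * ((aff 1 0 0 1 (i:ℝ) (j:ℝ) p).2 : ℝ)) / 3)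
      = 2 * (Real.pi:ℂ) * Complex.I * ((m*i+n*j : ℤ):ℂ) / 3
        + 2 * (Real.pi:ℂ) * Complex.I * ((m:ℂ) * (p.1:ℝ) + (n:ℂ) * (p.2:ℝ)) / 3 from by
    simp only [aff]; push_cast; ring]
  rw [exp_period _ h]

lemma efun_rho (m n : ℤ) (p : ℝ × ℝ) :
    efun m n (Phi (aff (-1) (-1) 1 0 0 0 p)) = efun (n-m) (-m) (Phi p) := by
  rw [efun_phi, efun_phi]
  congr 1
  simp only [aff]
  push_cast
  ring

lemma efun_s3 (m n : ℤ) (h : (3:ℤ) ∣ m + n) (p : ℝ × ℝ) :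
    efun m n (Phi (aff 0 (-1) (-1) 0 1 1 p)) = efun (-n) (-m) (Phi p) := by
  rw [efun_phi, efun_phi]
  rw [show (2 * (Real.pi:ℂ) * Complex.I *
        ((m:ℂ) * ((aff 0 (-1) (-1) 0 1 1 p).1 : ℝ) + (n:ℂ) * ((aff 0 (-1) (-1) 0 1 1 p).2 : ℝ)) / 3)
      = 2 * (Real.pi:ℂ) * Complex.I * ((m+n : ℤ):ℂ) / 3
        + 2 * (Real.pi:ℂ) * Complex.I * (((-n):ℂ) * (p.1:ℝ) + ((-m):ℂ) * (p.2:ℝ)) / 3 from by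
    simp only [aff]; push_cast; ring]
  rw [exp_period _ h]
  push_cast
  ring_nf

lemma dvd_key {m' n' i j : ℤ} (h1 : (3:ℤ) ∣ m' + n') (h2 : (3:ℤ) ∣ i - j) :
    (3:ℤ) ∣ m' * i + n' * j := by
  obtain ⟨a, ha⟩ := h1
  obtain ⟨b, hb⟩ := h2
  exact ⟨m' * b + a * j, by linear_combination m' * hb + j * ha⟩

/-! ### Symmetries of the eigenfunctions -/

lemma Ufun_trans (m n : ℤ) (hmn : (3:ℤ) ∣ m + n) (i j : ℤ) (hij : (3:ℤ) ∣ i - j) (p : ℝ × ℝ) :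
    Ufun m n (Phi (aff 1 0 0 1 (i:ℝ) (j:ℝ) p)) = Ufun m n (Phi p) := by
  unfold Ufun
  rw [efun_trans m n i j (dvd_key hmn hij),
      efun_trans m (m-n) i j (dvd_key (by omega) hij),
      efun_trans (-n) (m-n) i j (dvd_key (by omega) hij),
      efun_trans (-n) (-m) i j (dvd_key (by omega) hij),
      efun_trans (n-m) (-m) i j (dvd_key (by omega) hij),
      efun_trans (n-m) n i j (dvd_key (by omega) hij)]

lemma Vfun_trans (m n : ℤ) (hmn : (3:ℤ) ∣ m + n) (i j : ℤ) (hij : (3:ℤ) ∣ i - j) (p : ℝ × ℝ) :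
    Vfun m n (Phi (aff 1 0 0 1 (i:ℝ) (j:ℝ) p)) = Vfun m n (Phi p) := by
  unfold Vfun
  rw [efun_trans m n i j (dvd_key hmn hij),
      efun_trans m (m-n) i j (dvd_key (by omega) hij),
      efun_trans (-n) (m-n) i j (dvd_key (by omega) hij),
      efun_trans (-n) (-m) i j (dvd_key (by omega) hij),
      efun_trans (n-m) (-m) i j (dvd_key (by omega) hij),
      efun_trans (n-m) n i j (dvd_key (by omega) hij)]

lemma Ufun_rho (m n : ℤ) (p : ℝ × ℝ) :
    Ufun m n (Phi (aff (-1) (-1) 1 0 0 0 p)) = Ufun m n (Phi p) := by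
  unfold Ufun
  simp only [efun_rho]
  simp only [show m - n - m = -n from by ring, show m - n - -n = m from by ring,
    neg_neg, show -m - -n = n - m from by ring, show -m - (n - m) = -n from by ring,
    show -(n - m) = m - n from by ring, show n - (n - m) = m from by ring]
  ring

lemma Vfun_rho (m n : ℤ) (p : ℝ × ℝ) :
    Vfun m n (Phi (aff (-1) (-1) 1 0 0 0 p)) = Vfun m n (Phi p) := by
  unfold Vfun
  simp only [efun_rho]
  simp only [show m - n - m = -n from by ring, show m - n - -n = m from by ring,
    neg_neg, show -m - -n = n - m from by ring, show -m - (n - m) = -n from by ring,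
    show -(n - m) = m - n from by ring, show n - (n - m) = m from by ring]
  ring

lemma Ufun_s3 (m n : ℤ) (hmn : (3:ℤ) ∣ m + n) (p : ℝ × ℝ) :
    Ufun m n (Phi (aff 0 (-1) (-1) 0 1 1 p)) = Ufun m n (Phi p) := by
  unfold Ufun
  rw [efun_s3 m n hmn, efun_s3 m (m-n) (by omega), efun_s3 (-n) (m-n) (by omega),
      efun_s3 (-n) (-m) (by omega), efun_s3 (n-m) (-m) (by omega), efun_s3 (n-m) n (by omega)]
  simp only [neg_neg, show -(m - n) = n - m from by ring, show -(n - m) = m - n from by ring]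
  ring

lemma Vfun_s3 (m n : ℤ) (hmn : (3:ℤ) ∣ m + n) (p : ℝ × ℝ) :
    Vfun m n (Phi (aff 0 (-1) (-1) 0 1 1 p)) = - Vfun m n (Phi p) := by
  unfold Vfun
  rw [efun_s3 m n hmn, efun_s3 m (m-n) (by omega), efun_s3 (-n) (m-n) (by omega),
      efun_s3 (-n) (-m) (by omega), efun_s3 (n-m) (-m) (by omega), efun_s3 (n-m) n (by omega)]
  simp only [neg_neg, show -(m - n) = n - m from by ring, show -(n - m) = m - n from by ring]
  ring

/-! ### Lifting symmetries to the span -/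

lemma span_sym {Fam : Set ((ℝ×ℝ) → ℂ)} {g : ℝ×ℝ → ℝ×ℝ} {ε : ℂ}
    (hb : ∀ u ∈ Fam, ∀ x, u (Phi (g x)) = ε * u (Phi x))
    {f : (ℝ×ℝ) → ℂ} (hf : f ∈ Submodule.span ℂ Fam) :
    ∀ x, f (Phi (g x)) = ε * f (Phi x) := by
  induction hf using Submodule.span_induction with
  | mem u hu => exact hb u hu
  | zero => intro x; simp
  | add u v hu' hv' hu hv => intro x; simp only [Pi.add_apply, hu x, hv x]; ring
  | smul a u hu' hu => intro x; simp only [Pi.smul_apply, smul_eq_mul, hu x]; ring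

lemma span_cont {Fam : Set ((ℝ×ℝ) → ℂ)} (hb : ∀ u ∈ Fam, Continuous u)
    {f : (ℝ×ℝ) → ℂ} (hf : f ∈ Submodule.span ℂ Fam) : Continuous f := by
  induction hf using Submodule.span_induction with
  | mem u hu => exact hb u hu
  | zero => exact continuous_zero
  | add u v hu' hv' hu hv => exact hu.add hv
  | smul a u hu' hu => exact hu.const_smul a

lemma efun_cont (m n : ℤ) : Continuous (efun m n) := by
  unfold efun
  exact Complex.continuous_exp.comp (continuous_const.mul (Complex.continuous_ofReal.comp
    ((continuous_const.mul continuous_fst).add (continuous_const.mul continuous_snd))))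

lemma Ufun_cont (m n : ℤ) : Continuous (Ufun m n) := by
  unfold Ufun
  exact (((((efun_cont m n).add (efun_cont m (m-n))).add (efun_cont (-n) (m-n))).add
    (efun_cont (-n) (-m))).add (efun_cont (n-m) (-m))).add (efun_cont (n-m) n)

lemma Vfun_cont (m n : ℤ) : Continuous (Vfun m n) := by
  unfold Vfun
  exact (((((efun_cont m n).sub (efun_cont m (m-n))).add (efun_cont (-n) (m-n))).sub
    (efun_cont (-n) (-m))).add (efun_cont (n-m) (-m))).sub (efun_cont (n-m) n)

/-! ### The triangles and the tiling -/

def Delta : Set (ℝ × ℝ) := {p | 0 < p.1 ∧ 0 < p.2 ∧ p.1 + p.2 < 1}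
def Sq : Set (ℝ × ℝ) := Set.Ioo (0:ℝ) 3 ×ˢ Set.Ioo (0:ℝ) 3
def Up (i j : ℝ) : Set (ℝ × ℝ) := {p | i < p.1 ∧ j < p.2 ∧ p.1 + p.2 < i + j + 1}
def Down (i j : ℝ) : Set (ℝ × ℝ) := {p | p.1 < i + 1 ∧ p.2 < j + 1 ∧ i + j + 1 < p.1 + p.2}

lemma measDelta : MeasurableSet Delta := by
  have h : Delta = {p : ℝ×ℝ | 0 < p.1} ∩ ({p | 0 < p.2} ∩ {p | p.1 + p.2 < 1}) := by
    ext p; simp [Delta, and_assoc]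
  rw [h]
  exact (measurableSet_lt measurable_const measurable_fst).inter
    ((measurableSet_lt measurable_const measurable_snd).inter
      (measurableSet_lt (measurable_fst.add measurable_snd) measurable_const))

lemma measUp (i j : ℝ) : MeasurableSet (Up i j) := by
  have h : Up i j = {p : ℝ×ℝ | i < p.1} ∩ ({p | j < p.2} ∩ {p | p.1 + p.2 < i + j + 1}) := by
    ext p; simp [Up, and_assoc]
  rw [h]
  exact (measurableSet_lt measurable_const measurable_fst).inter
    ((measurableSet_lt measurable_const measurable_snd).inter
      (measurableSet_lt (measurable_fst.add measurable_snd) measurable_const))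

lemma measDown (i j : ℝ) : MeasurableSet (Down i j) := by
  have h : Down i j = {p : ℝ×ℝ | p.1 < i + 1} ∩ ({p | p.2 < j + 1} ∩ {p | i + j + 1 < p.1 + p.2}) := by
    ext p; simp [Down, and_assoc]
  rw [h]
  exact (measurableSet_lt measurable_fst measurable_const).inter
    ((measurableSet_lt measurable_snd measurable_const).inter
      (measurableSet_lt measurable_const (measurable_fst.add measurable_snd)))

lemma measSq : MeasurableSet Sq := measurableSet_Ioo.prod measurableSet_Ioo

lemma im1 (i j : ℝ) : aff 1 0 0 1 i j '' Delta = Up i j := by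
  ext ⟨x, y⟩
  simp only [Set.mem_image, Delta, Up, aff, Set.mem_setOf_eq, Prod.mk.injEq, Prod.exists]
  constructor
  · rintro ⟨a, b, ⟨h1, h2, h3⟩, he1, he2⟩
    refine ⟨by linarith, by linarith, by linarith⟩
  · rintro ⟨h1, h2, h3⟩
    exact ⟨x - i, y - j, ⟨by linarith, by linarith, by linarith⟩, by ring, by ring⟩

lemma im2 (i j : ℝ) : aff (-1) (-1) 1 0 (i+1) j '' Delta = Up i j := by
  ext ⟨x, y⟩
  simp only [Set.mem_image, Delta, Up, aff, Set.mem_setOf_eq, Prod.mk.injEq, Prod.exists]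
  constructor
  · rintro ⟨a, b, ⟨h1, h2, h3⟩, he1, he2⟩
    refine ⟨by linarith, by linarith, by linarith⟩
  · rintro ⟨h1, h2, h3⟩
    exact ⟨y - j, i + j + 1 - x - y, ⟨by linarith, by linarith, by linarith⟩, by ring, by ring⟩

lemma im3 (i j : ℝ) : aff 0 1 (-1) (-1) i (j+1) '' Delta = Up i j := by
  ext ⟨x, y⟩
  simp only [Set.mem_image, Delta, Up, aff, Set.mem_setOf_eq, Prod.mk.injEq, Prod.exists]
  constructor
  · rintro ⟨a, b, ⟨h1, h2, h3⟩, he1, he2⟩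
    refine ⟨by linarith, by linarith, by linarith⟩
  · rintro ⟨h1, h2, h3⟩
    exact ⟨i + j + 1 - x - y, x - i, ⟨by linarith, by linarith, by linarith⟩, by ring, by ring⟩

lemma im4 (i j : ℝ) : aff 0 (-1) (-1) 0 (i+1) (j+1) '' Delta = Down i j := by
  ext ⟨x, y⟩
  simp only [Set.mem_image, Delta, Down, aff, Set.mem_setOf_eq, Prod.mk.injEq, Prod.exists]
  constructor
  · rintro ⟨a, b, ⟨h1, h2, h3⟩, he1, he2⟩
    refine ⟨by linarith, by linarith, by linarith⟩
  · rintro ⟨h1, h2, h3⟩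
    exact ⟨j + 1 - y, i + 1 - x, ⟨by linarith, by linarith, by linarith⟩, by ring, by ring⟩

lemma im5 (i j : ℝ) : aff 1 1 0 (-1) i (j+1) '' Delta = Down i j := by
  ext ⟨x, y⟩
  simp only [Set.mem_image, Delta, Down, aff, Set.mem_setOf_eq, Prod.mk.injEq, Prod.exists]
  constructor
  · rintro ⟨a, b, ⟨h1, h2, h3⟩, he1, he2⟩
    refine ⟨by linarith, by linarith, by linarith⟩
  · rintro ⟨h1, h2, h3⟩
    exact ⟨x + y - i - j - 1, j + 1 - y, ⟨by linarith, by linarith, by linarith⟩, by ring, by ring⟩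

lemma im6 (i j : ℝ) : aff (-1) 0 1 1 (i+1) j '' Delta = Down i j := by
  ext ⟨x, y⟩
  simp only [Set.mem_image, Delta, Down, aff, Set.mem_setOf_eq, Prod.mk.injEq, Prod.exists]
  constructor
  · rintro ⟨a, b, ⟨h1, h2, h3⟩, he1, he2⟩
    refine ⟨by linarith, by linarith, by linarith⟩
  · rintro ⟨h1, h2, h3⟩
    exact ⟨i + 1 - x, x + y - i - j - 1, ⟨by linarith, by linarith, by linarith⟩, by ring, by ring⟩

/-! ### Hypothesis bundles for the symmetrized integrand -/

def THyp (F : ℝ×ℝ → ℝ) : Prop :=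
  ∀ i j : ℤ, (3:ℤ) ∣ i - j → ∀ x, F (aff 1 0 0 1 (i:ℝ) (j:ℝ) x) = F x
def RHyp (F : ℝ×ℝ → ℝ) : Prop := ∀ x, F (aff (-1) (-1) 1 0 0 0 x) = F x
def SHyp (F : ℝ×ℝ → ℝ) : Prop := ∀ x, F (aff 0 (-1) (-1) 0 1 1 x) = F x

lemma shape2 {F : ℝ×ℝ → ℝ} (hT : THyp F) (hR : RHyp F) (i j : ℤ)
    (h : (3:ℤ) ∣ i + 1 - j) (x : ℝ×ℝ) :
    F (aff (-1) (-1) 1 0 ((i:ℝ)+1) (j:ℝ) x) = F x := by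
  have hpt : aff (-1) (-1) 1 0 ((i:ℝ)+1) (j:ℝ) x
      = aff 1 0 0 1 (((i+1:ℤ)):ℝ) ((j:ℤ):ℝ) (aff (-1) (-1) 1 0 0 0 x) := by
    simp only [aff, Prod.mk.injEq]; constructor <;> push_cast <;> ring
  rw [hpt, hT (i+1) j h, hR]

lemma shape3 {F : ℝ×ℝ → ℝ} (hT : THyp F) (hR : RHyp F) (i j : ℤ)
    (h : (3:ℤ) ∣ i - (j + 1)) (x : ℝ×ℝ) :
    F (aff 0 1 (-1) (-1) (i:ℝ) ((j:ℝ)+1) x) = F x := by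
  have hpt : aff 0 1 (-1) (-1) (i:ℝ) ((j:ℝ)+1) x
      = aff 1 0 0 1 ((i:ℤ):ℝ) ((j+1:ℤ):ℝ) (aff (-1) (-1) 1 0 0 0 (aff (-1) (-1) 1 0 0 0 x)) := by
    simp only [aff, Prod.mk.injEq]; constructor <;> push_cast <;> ring
  rw [hpt, hT i (j+1) h, hR, hR]

lemma shape4 {F : ℝ×ℝ → ℝ} (hT : THyp F) (hS : SHyp F) (i j : ℤ)
    (h : (3:ℤ) ∣ i - j) (x : ℝ×ℝ) :
    F (aff 0 (-1) (-1) 0 ((i:ℝ)+1) ((j:ℝ)+1) x) = F x := by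
  have hpt : aff 0 (-1) (-1) 0 ((i:ℝ)+1) ((j:ℝ)+1) x
      = aff 1 0 0 1 ((i:ℤ):ℝ) ((j:ℤ):ℝ) (aff 0 (-1) (-1) 0 1 1 x) := by
    simp only [aff, Prod.mk.injEq]; constructor <;> push_cast <;> ring
  rw [hpt, hT i j h, hS]

lemma shape5 {F : ℝ×ℝ → ℝ} (hT : THyp F) (hR : RHyp F) (hS : SHyp F) (i j : ℤ)
    (h : (3:ℤ) ∣ i + 2 - j) (x : ℝ×ℝ) :
    F (aff 1 1 0 (-1) (i:ℝ) ((j:ℝ)+1) x) = F x := by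
  have hpt : aff 1 1 0 (-1) (i:ℝ) ((j:ℝ)+1) x
      = aff 1 0 0 1 ((i+2:ℤ):ℝ) ((j:ℤ):ℝ)
          (aff (-1) (-1) 1 0 0 0 (aff 0 (-1) (-1) 0 1 1 x)) := by
    simp only [aff, Prod.mk.injEq]; constructor <;> push_cast <;> ring
  rw [hpt, hT (i+2) j h, hR, hS]

lemma shape6 {F : ℝ×ℝ → ℝ} (hT : THyp F) (hR : RHyp F) (hS : SHyp F) (i j : ℤ)
    (h : (3:ℤ) ∣ i - (j + 2)) (x : ℝ×ℝ) :
    F (aff (-1) 0 1 1 ((i:ℝ)+1) (j:ℝ) x) = F x := by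
  have hpt : aff (-1) 0 1 1 ((i:ℝ)+1) (j:ℝ) x
      = aff 1 0 0 1 ((i:ℤ):ℝ) ((j+2:ℤ):ℝ)
          (aff (-1) (-1) 1 0 0 0 (aff (-1) (-1) 1 0 0 0 (aff 0 (-1) (-1) 0 1 1 x))) := by
    simp only [aff, Prod.mk.injEq]; constructor <;> push_cast <;> ring
  rw [hpt, hT i (j+2) h, hR, hR, hS]

/-! ### Integrals over the tiles -/

lemma pieceUp1 {F : ℝ×ℝ → ℝ} (hT : THyp F) (i j : ℤ) (h : (3:ℤ) ∣ i - j) :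
    ∫ x in Up (i:ℝ) (j:ℝ), F x = ∫ x in Delta, F x := by
  rw [← im1 (i:ℝ) (j:ℝ), setIntegral_image_aff measDelta 1 0 0 1 _ _ (by norm_num)]
  rw [show |(1:ℝ)*1 - 0*0| = 1 from by norm_num, one_mul]
  exact setIntegral_congr_fun measDelta (fun x _ => hT i j h x)

lemma pieceUp2 {F : ℝ×ℝ → ℝ} (hT : THyp F) (hR : RHyp F) (i j : ℤ) (h : (3:ℤ) ∣ i + 1 - j) :
    ∫ x in Up (i:ℝ) (j:ℝ), F x = ∫ x in Delta, F x := by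
  rw [← im2 (i:ℝ) (j:ℝ), setIntegral_image_aff measDelta (-1) (-1) 1 0 _ _ (by norm_num)]
  rw [show |(-1:ℝ)*0 - (-1)*1| = 1 from by norm_num, one_mul]
  exact setIntegral_congr_fun measDelta (fun x _ => shape2 hT hR i j h x)

lemma pieceUp3 {F : ℝ×ℝ → ℝ} (hT : THyp F) (hR : RHyp F) (i j : ℤ) (h : (3:ℤ) ∣ i - (j + 1)) :
    ∫ x in Up (i:ℝ) (j:ℝ), F x = ∫ x in Delta, F x := by
  rw [← im3 (i:ℝ) (j:ℝ), setIntegral_image_aff measDelta 0 1 (-1) (-1) _ _ (by norm_num)]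
  rw [show |(0:ℝ)*(-1) - 1*(-1)| = 1 from by norm_num, one_mul]
  exact setIntegral_congr_fun measDelta (fun x _ => shape3 hT hR i j h x)

lemma pieceDown1 {F : ℝ×ℝ → ℝ} (hT : THyp F) (hS : SHyp F) (i j : ℤ) (h : (3:ℤ) ∣ i - j) :
    ∫ x in Down (i:ℝ) (j:ℝ), F x = ∫ x in Delta, F x := by
  rw [← im4 (i:ℝ) (j:ℝ), setIntegral_image_aff measDelta 0 (-1) (-1) 0 _ _ (by norm_num)]
  rw [show |(0:ℝ)*0 - (-1)*(-1)| = 1 from by norm_num, one_mul]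
  exact setIntegral_congr_fun measDelta (fun x _ => shape4 hT hS i j h x)

lemma pieceDown2 {F : ℝ×ℝ → ℝ} (hT : THyp F) (hR : RHyp F) (hS : SHyp F) (i j : ℤ)
    (h : (3:ℤ) ∣ i + 2 - j) :
    ∫ x in Down (i:ℝ) (j:ℝ), F x = ∫ x in Delta, F x := by
  rw [← im5 (i:ℝ) (j:ℝ), setIntegral_image_aff measDelta 1 1 0 (-1) _ _ (by norm_num)]
  rw [show |(1:ℝ)*(-1) - 1*0| = 1 from by norm_num, one_mul]
  exact setIntegral_congr_fun measDelta (fun x _ => shape5 hT hR hS i j h x)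

lemma pieceDown3 {F : ℝ×ℝ → ℝ} (hT : THyp F) (hR : RHyp F) (hS : SHyp F) (i j : ℤ)
    (h : (3:ℤ) ∣ i - (j + 2)) :
    ∫ x in Down (i:ℝ) (j:ℝ), F x = ∫ x in Delta, F x := by
  rw [← im6 (i:ℝ) (j:ℝ), setIntegral_image_aff measDelta (-1) 0 1 1 _ _ (by norm_num)]
  rw [show |(-1:ℝ)*1 - 0*1| = 1 from by norm_num, one_mul]
  exact setIntegral_congr_fun measDelta (fun x _ => shape6 hT hR hS i j h x)

/-! ### The 18 tiles -/

def Tz (z : Fin 3 × Fin 3 × Bool) : Set (ℝ × ℝ) :=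
  if z.2.2 then Up ((z.1 : ℕ) : ℝ) ((z.2.1 : ℕ) : ℝ) else Down ((z.1 : ℕ) : ℝ) ((z.2.1 : ℕ) : ℝ)

lemma measTz (z : Fin 3 × Fin 3 × Bool) : MeasurableSet (Tz z) := by
  unfold Tz
  split
  · exact measUp _ _
  · exact measDown _ _

lemma Tz_subset_cell (z : Fin 3 × Fin 3 × Bool) :
    Tz z ⊆ Set.Ioo ((z.1:ℕ):ℝ) ((z.1:ℕ)+1) ×ˢ Set.Ioo ((z.2.1:ℕ):ℝ) ((z.2.1:ℕ)+1) := by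
  obtain ⟨i, j, u⟩ := z
  rcases u with _ | _ <;> rintro ⟨x, y⟩ h
  · obtain ⟨h1, h2, h3⟩ : _ ∧ _ ∧ _ := h
    exact ⟨⟨by linarith, by linarith⟩, by exact ⟨by linarith, by linarith⟩⟩
  · obtain ⟨h1, h2, h3⟩ : _ ∧ _ ∧ _ := h
    exact ⟨⟨by linarith, by linarith⟩, by exact ⟨by linarith, by linarith⟩⟩

lemma nat_Ioo_disj {a b : ℕ} (hne : a ≠ b) {x : ℝ} (h1 : (a:ℝ) < x) (h2 : x < a + 1)
    (h3 : (b:ℝ) < x) (h4 : x < b + 1) : False := by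
  rcases Nat.lt_or_ge a b with h | h
  · have : (a:ℝ) + 1 ≤ b := by exact_mod_cast h
    linarith
  · have hba : b < a := Nat.lt_of_le_of_ne h (Ne.symm hne)
    have : (b:ℝ) + 1 ≤ a := by exact_mod_cast hba
    linarith

lemma Tz_disjoint : Pairwise (Function.onFun Disjoint Tz) := by
  rintro ⟨i, j, u⟩ ⟨i', j', u'⟩ hne
  rw [Function.onFun, Set.disjoint_left]
  intro p hp hp'
  have hc := Tz_subset_cell (i, j, u) hp
  have hc' := Tz_subset_cell (i', j', u') hp'
  obtain ⟨⟨a1, a2⟩, b1, b2⟩ := hc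
  obtain ⟨⟨a1', a2'⟩, b1', b2'⟩ := hc'
  by_cases hii : i = i'
  · by_cases hjj : j = j'
    · subst hii; subst hjj
      have huu : u ≠ u' := by
        intro h; exact hne (by simp [h])
      rcases u with _ | _ <;> rcases u' with _ | _ <;> simp_all
      · obtain ⟨_, _, hd⟩ : _ ∧ _ ∧ _ := hp
        obtain ⟨_, _, hu⟩ : _ ∧ _ ∧ _ := hp'
        linarith
      · obtain ⟨_, _, hu⟩ : _ ∧ _ ∧ _ := hp
        obtain ⟨_, _, hd⟩ : _ ∧ _ ∧ _ := hp'
        linarith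
    · exact nat_Ioo_disj (fun h => hjj (Fin.ext h)) b1 b2 b1' b2'
  · exact nat_Ioo_disj (fun h => hii (Fin.ext h)) a1 a2 a1' a2'

/-! ### Null boundary -/

def NN : Set (ℝ × ℝ) := {p | p.1 = 1 ∨ p.1 = 2 ∨ p.2 = 1 ∨ p.2 = 2 ∨ p.1 + p.2 = 1 ∨
    p.1 + p.2 = 2 ∨ p.1 + p.2 = 3 ∨ p.1 + p.2 = 4 ∨ p.1 + p.2 = 5}

lemma vline (c : ℝ) : volume {p : ℝ × ℝ | p.1 = c} = 0 := by
  have h : {p : ℝ × ℝ | p.1 = c} = ({c} : Set ℝ) ×ˢ (Set.univ : Set ℝ) := by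
    ext ⟨x, y⟩; simp [eq_comm]
  rw [h, Measure.volume_eq_prod, Measure.prod_prod]
  simp

lemma hline (c : ℝ) : volume {p : ℝ × ℝ | p.2 = c} = 0 := by
  have h : {p : ℝ × ℝ | p.2 = c} = (Set.univ : Set ℝ) ×ˢ ({c} : Set ℝ) := by
    ext ⟨x, y⟩; simp [eq_comm]
  rw [h, Measure.volume_eq_prod, Measure.prod_prod]
  simp

lemma dline (c : ℝ) : volume {p : ℝ × ℝ | p.1 + p.2 = c} = 0 := by
  have hm : MeasurableSet {p : ℝ × ℝ | p.1 + p.2 = c} :=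
    measurableSet_eq_fun (measurable_fst.add measurable_snd) measurable_const
  rw [Measure.volume_eq_prod, Measure.prod_apply hm]
  have h : ∀ x : ℝ, (Prod.mk x ⁻¹' {p : ℝ × ℝ | p.1 + p.2 = c}) = {c - x} := by
    intro x; ext y
    simp only [Set.mem_preimage, Set.mem_setOf_eq, Set.mem_singleton_iff]
    constructor <;> intro hy <;> linarith
  simp only [h]
  simp

lemma NN_null : volume NN = 0 := by
  have h : NN ⊆ {p : ℝ × ℝ | p.1 = 1} ∪ ({p | p.1 = 2} ∪ ({p | p.2 = 1} ∪ ({p | p.2 = 2} ∪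
      ({p | p.1 + p.2 = 1} ∪ ({p | p.1 + p.2 = 2} ∪ ({p | p.1 + p.2 = 3} ∪
      ({p | p.1 + p.2 = 4} ∪ {p | p.1 + p.2 = 5}))))))) := by
    intro p hp
    simp only [NN, Set.mem_setOf_eq] at hp
    simp only [Set.mem_union, Set.mem_setOf_eq]
    tauto
  refine measure_mono_null h ?_
  exact measure_union_null (vline 1) (measure_union_null (vline 2) (measure_union_null (hline 1)
    (measure_union_null (hline 2) (measure_union_null (dline 1) (measure_union_null (dline 2)
    (measure_union_null (dline 3) (measure_union_null (dline 4) (dline 5))))))))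

lemma mem_union_Tz {x y : ℝ} (i j : ℕ) (hi : i < 3) (hj : j < 3)
    (hi1 : (i:ℝ) < x) (hi2 : x < i + 1) (hj1 : (j:ℝ) < y) (hj2 : y < j + 1)
    (hne : x + y ≠ i + j + 1) : (x, y) ∈ ⋃ z, Tz z := by
  rcases lt_or_gt_of_ne hne with h | h
  · exact Set.mem_iUnion.2 ⟨(⟨i, hi⟩, ⟨j, hj⟩, true), by
      simp only [Tz, if_true]; exact ⟨hi1, hj1, h⟩⟩
  · exact Set.mem_iUnion.2 ⟨(⟨i, hi⟩, ⟨j, hj⟩, false), by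
      simp only [Tz, if_false, Bool.false_eq_true]
      exact ⟨by linarith, by linarith, h⟩⟩

lemma Sq_cover : Sq \ (⋃ z, Tz z) ⊆ NN := by
  rintro ⟨x, y⟩ ⟨hSq, hnot⟩
  by_contra hN
  apply hnot
  obtain ⟨⟨hx0, hx3⟩, hy0, hy3⟩ := hSq
  simp only [NN, Set.mem_setOf_eq, not_or] at hN
  obtain ⟨h1, h2, h3, h4, h5, h6, h7, h8, h9⟩ := hN
  have hx : ∃ i : ℕ, i < 3 ∧ (i:ℝ) < x ∧ x < i + 1 := by
    rcases lt_trichotomy x 1 with h | h | h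
    · exact ⟨0, by norm_num, by norm_num [hx0], by norm_num [h]⟩
    · exact absurd h h1
    rcases lt_trichotomy x 2 with h' | h' | h'
    · exact ⟨1, by norm_num, by norm_num [h], by norm_num [h']⟩
    · exact absurd h' h2
    · exact ⟨2, by norm_num, by norm_num [h'], by norm_num [hx3]⟩
  have hy : ∃ j : ℕ, j < 3 ∧ (j:ℝ) < y ∧ y < j + 1 := by
    rcases lt_trichotomy y 1 with h | h | h
    · exact ⟨0, by norm_num, by norm_num [hy0], by norm_num [h]⟩
    · exact absurd h h3
    rcases lt_trichotomy y 2 with h' | h' | h'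
    · exact ⟨1, by norm_num, by norm_num [h], by norm_num [h']⟩
    · exact absurd h' h4
    · exact ⟨2, by norm_num, by norm_num [h'], by norm_num [hy3]⟩
  obtain ⟨i, hi, hi1, hi2⟩ := hx
  obtain ⟨j, hj, hj1, hj2⟩ := hy
  refine mem_union_Tz i j hi hj hi1 hi2 hj1 hj2 ?_
  intro hc
  interval_cases i <;> interval_cases j <;> norm_num at hc <;> simp_all

lemma Tz_subset_Sq (z : Fin 3 × Fin 3 × Bool) : Tz z ⊆ Sq := by
  intro p hp
  have hc := Tz_subset_cell z hp
  obtain ⟨⟨a1, a2⟩, b1, b2⟩ := hc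
  have hzi : ((z.1 : ℕ) : ℝ) ≤ 2 := by
    have := z.1.isLt; exact_mod_cast Nat.lt_succ_iff.1 this
  have hzj : ((z.2.1 : ℕ) : ℝ) ≤ 2 := by
    have := z.2.1.isLt; exact_mod_cast Nat.lt_succ_iff.1 this
  constructor
  · constructor
    · have : (0:ℝ) ≤ ((z.1 : ℕ) : ℝ) := Nat.cast_nonneg _
      linarith
    · linarith
  · constructor
    · have : (0:ℝ) ≤ ((z.2.1 : ℕ) : ℝ) := Nat.cast_nonneg _
      linarith
    · linarith

/-! ### Descriptions of `Pins` and `Tri` -/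

lemma Phi_apply (a b : ℝ) : Phi (a, b) = (a + b * (1/2), b * (Real.sqrt 3 / 2)) := by
  simp only [Phi, aff, Prod.mk.injEq]
  constructor <;> ring

lemma Pins_eq : Pins = Phi '' Sq := by
  ext x
  simp only [Pins, Set.mem_setOf_eq, Set.mem_image, Sq, Set.mem_prod, Set.mem_Ioo, Prod.exists]
  constructor
  · rintro ⟨a, b, h1, h2, h3, h4, rfl⟩
    exact ⟨a, b, ⟨⟨h1, h2⟩, h3, h4⟩, Phi_apply a b⟩
  · rintro ⟨a, b, ⟨⟨h1, h2⟩, h3, h4⟩, rfl⟩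
    exact ⟨a, b, h1, h2, h3, h4, Phi_apply a b⟩

lemma Tri_eq : Tri = Phi '' Delta := by
  have hs : (0:ℝ) < Real.sqrt 3 := by positivity
  ext ⟨x, y⟩
  simp only [Tri, Set.mem_setOf_eq, Set.mem_image, Delta, Prod.exists]
  constructor
  · rintro ⟨h1, h2, h3, h4, h5⟩
    refine ⟨x - y / Real.sqrt 3, 2 * y / Real.sqrt 3, ⟨?_, ?_, ?_⟩, ?_⟩
    · have : y / Real.sqrt 3 < x := (div_lt_iff₀ hs).2 (by nlinarith)
      show 0 < x - y / Real.sqrt 3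
      linarith
    · positivity
    · have : y / Real.sqrt 3 < 1 - x := (div_lt_iff₀ hs).2 (by nlinarith)
      show (x - y / Real.sqrt 3) + 2 * y / Real.sqrt 3 < 1
      rw [show 2 * y / Real.sqrt 3 = 2 * (y / Real.sqrt 3) from by ring]
      linarith
    · rw [Phi_apply, Prod.mk.injEq]
      constructor
      · field_simp
        ring
      · field_simp
  · rintro ⟨a, b, ⟨ha, hb, hab⟩, heq⟩
    rw [Phi_apply, Prod.mk.injEq] at heq
    obtain ⟨hx, hy⟩ := heq
    subst hx; subst hy
    refine ⟨by linarith, by linarith, ?_, ?_, ?_⟩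
    · have := mul_pos hb (by positivity : (0:ℝ) < Real.sqrt 3 / 2)
      linarith
    · nlinarith
    · nlinarith


set_option maxHeartbeats 1000000 in
lemma tiles_eq {F : ℝ×ℝ → ℝ} (hT : THyp F) (hR : RHyp F) (hS : SHyp F) :
    ∀ z : Fin 3 × Fin 3 × Bool, ∫ x in Tz z, F x = ∫ x in Delta, F x := by
  rintro ⟨i, j, u⟩
  fin_cases i <;> fin_cases j <;> rcases u with _ | _ <;>
    simp only [Tz, if_true, if_false, Bool.false_eq_true] <;> norm_num
  · simpa using pieceDown1 hT hS 0 0 (by norm_num)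
  · simpa using pieceUp1 hT 0 0 (by norm_num)
  · simpa using pieceDown3 hT hR hS 0 1 (by norm_num)
  · simpa using pieceUp2 hT hR 0 1 (by norm_num)
  · simpa using pieceDown2 hT hR hS 0 2 (by norm_num)
  · simpa using pieceUp3 hT hR 0 2 (by norm_num)
  · simpa using pieceDown2 hT hR hS 1 0 (by norm_num)
  · simpa using pieceUp3 hT hR 1 0 (by norm_num)
  · simpa using pieceDown1 hT hS 1 1 (by norm_num)
  · simpa using pieceUp1 hT 1 1 (by norm_num)
  · simpa using pieceDown3 hT hR hS 1 2 (by norm_num)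
  · simpa using pieceUp2 hT hR 1 2 (by norm_num)
  · simpa using pieceDown3 hT hR hS 2 0 (by norm_num)
  · simpa using pieceUp2 hT hR 2 0 (by norm_num)
  · simpa using pieceDown2 hT hR hS 2 1 (by norm_num)
  · simpa using pieceUp3 hT hR 2 1 (by norm_num)
  · simpa using pieceDown1 hT hS 2 2 (by norm_num)
  · simpa using pieceUp1 hT 2 2 (by norm_num)

/-! ### Main theorem -/

set_option maxHeartbeats 1000000 in
/-- For any finite `ℂ`-linear combination `f` of the Neumann eigenfunctions (resp. of the
Dirichlet eigenfunctions) and any `p ∈ [1,∞)`, `∫_𝒫 |f|ᵖ = 18 ∫_𝒯 |f|ᵖ`. -/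
theorem integral_pow_parallelogram_eq_18_triangle
    (p : ℝ) (hp : 1 ≤ p) (f : (ℝ × ℝ) → ℂ)
    (hf : f ∈ Submodule.span ℂ NeumannFamily ∨ f ∈ Submodule.span ℂ DirichletFamily) :
    (∫ x in Pins, ‖f x‖ ^ p) = 18 * ∫ x in Tri, ‖f x‖ ^ p := by
  have hsym : (∀ i j : ℤ, (3:ℤ) ∣ i - j →
        ∀ x, ‖f (Phi (aff 1 0 0 1 (i:ℝ) (j:ℝ) x))‖ = ‖f (Phi x)‖)
      ∧ (∀ x, ‖f (Phi (aff (-1) (-1) 1 0 0 0 x))‖ = ‖f (Phi x)‖)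
      ∧ (∀ x, ‖f (Phi (aff 0 (-1) (-1) 0 1 1 x))‖ = ‖f (Phi x)‖)
      ∧ Continuous f := by
    rcases hf with hf | hf
    · refine ⟨fun i j hij x => ?_, fun x => ?_, fun x => ?_, ?_⟩
      · rw [span_sym (ε := 1)
          (fun u hu x => by
            obtain ⟨m, n, hmn, rfl⟩ := hu
            rw [Ufun_trans m n hmn i j hij x, one_mul]) hf x, one_mul]
      · rw [span_sym (ε := 1)
          (fun u hu x => by
            obtain ⟨m, n, hmn, rfl⟩ := hu
            rw [Ufun_rho m n x, one_mul]) hf x, one_mul]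
      · rw [span_sym (ε := 1)
          (fun u hu x => by
            obtain ⟨m, n, hmn, rfl⟩ := hu
            rw [Ufun_s3 m n hmn x, one_mul]) hf x, one_mul]
      · exact span_cont (fun u hu => by obtain ⟨m, n, _, rfl⟩ := hu; exact Ufun_cont m n) hf
    · refine ⟨fun i j hij x => ?_, fun x => ?_, fun x => ?_, ?_⟩
      · rw [span_sym (ε := 1)
          (fun u hu x => by
            obtain ⟨m, n, hmn, _, _, rfl⟩ := hu
            rw [Vfun_trans m n hmn i j hij x, one_mul]) hf x, one_mul]
      · rw [span_sym (ε := 1)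
          (fun u hu x => by
            obtain ⟨m, n, hmn, _, _, rfl⟩ := hu
            rw [Vfun_rho m n x, one_mul]) hf x, one_mul]
      · rw [span_sym (ε := -1)
          (fun u hu x => by
            obtain ⟨m, n, hmn, _, _, rfl⟩ := hu
            rw [Vfun_s3 m n hmn x]; ring) hf x]
        rw [neg_one_mul, norm_neg]
      · exact span_cont (fun u hu => by obtain ⟨m, n, _, _, _, rfl⟩ := hu; exact Vfun_cont m n) hf
  obtain ⟨hT1, hR1, hS1, hcont⟩ := hsym
  have hT : THyp (fun y => ‖f (Phi y)‖ ^ p) :=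
    fun i j h x => congrArg (fun t : ℝ => t ^ p) (hT1 i j h x)
  have hR : RHyp (fun y => ‖f (Phi y)‖ ^ p) :=
    fun x => congrArg (fun t : ℝ => t ^ p) (hR1 x)
  have hS : SHyp (fun y => ‖f (Phi y)‖ ^ p) :=
    fun x => congrArg (fun t : ℝ => t ^ p) (hS1 x)
  have hPhiCont : Continuous Phi := by
    unfold Phi aff
    fun_prop
  have hHcont : Continuous (fun y => ‖f (Phi y)‖ ^ p) :=
    ((hcont.comp hPhiCont).norm).rpow_const (fun x => Or.inr (by linarith))
  have hint : IntegrableOn (fun y => ‖f (Phi y)‖ ^ p)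
      (Set.Icc ((0:ℝ), (0:ℝ)) ((3:ℝ), (3:ℝ))) :=
    hHcont.continuousOn.integrableOn_compact isCompact_Icc
  have hSqIcc : Sq ⊆ Set.Icc ((0:ℝ), (0:ℝ)) ((3:ℝ), (3:ℝ)) := by
    rw [← Set.Icc_prod_Icc]
    exact Set.prod_mono Set.Ioo_subset_Icc_self Set.Ioo_subset_Icc_self
  have hintU : IntegrableOn (fun y => ‖f (Phi y)‖ ^ p) (⋃ z, Tz z) :=
    hint.mono_set (fun q hq => hSqIcc (Set.iUnion_subset Tz_subset_Sq hq))
  have key := tiles_eq hT hR hS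
  have hae : Sq =ᵐ[volume] ⋃ z, Tz z := by
    rw [MeasureTheory.ae_eq_set]
    constructor
    · exact measure_mono_null Sq_cover NN_null
    · rw [Set.diff_eq_empty.2 (Set.iUnion_subset Tz_subset_Sq)]
      exact measure_empty
  have hSq_int : ∫ x in Sq, ‖f (Phi x)‖ ^ p = 18 * ∫ x in Delta, ‖f (Phi x)‖ ^ p := by
    rw [setIntegral_congr_set hae, integral_iUnion measTz Tz_disjoint hintU, tsum_fintype]
    rw [Finset.sum_congr rfl (fun z _ => key z), Finset.sum_const, Finset.card_univ]
    rw [show Fintype.card (Fin 3 × Fin 3 × Bool) = 18 from by simp, nsmul_eq_mul]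
    norm_num
  have hdet : (1:ℝ) * (Real.sqrt 3 / 2) - (1/2) * 0 ≠ 0 := by
    have h3 : (0:ℝ) < Real.sqrt 3 := by positivity
    intro hc
    nlinarith
  have hPins : (∫ x in Pins, ‖f x‖ ^ p)
      = |(1:ℝ) * (Real.sqrt 3 / 2) - (1/2) * 0| * ∫ x in Sq, ‖f (Phi x)‖ ^ p := by
    rw [Pins_eq, Phi_def]
    exact setIntegral_image_aff measSq 1 (1/2) 0 (Real.sqrt 3 / 2) 0 0 hdet (fun y => ‖f y‖ ^ p)
  have hTri : (∫ x in Tri, ‖f x‖ ^ p)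
      = |(1:ℝ) * (Real.sqrt 3 / 2) - (1/2) * 0| * ∫ x in Delta, ‖f (Phi x)‖ ^ p := by
    rw [Tri_eq, Phi_def]
    exact setIntegral_image_aff measDelta 1 (1/2) 0 (Real.sqrt 3 / 2) 0 0 hdet (fun y => ‖f y‖ ^ p)
  rw [hPins, hTri, hSq_int]
  ring

end
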